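/- Let n ≥ 1, let a₁, a₂, …, aₙ be distinct positive real numbers, and let M be a set of n−1 positive real numbers not containing s = a₁ + a₂ + ⋯ + aₙ. Then there exists a permutation σ of {1, …, n} such that for every l with 1 ≤ l ≤ n, the partial sum a_{σ(1)} + a_{σ(2)} + ⋯ + a_{σ(l)} does not belong to M. -/

import Mathlib

lemma sum_take_le {l : List ℝ} (hpos : ∀ x ∈ l, 0 < x) {j k : ℕ} (hjk : j ≤ k) :
    (l.take j).sum ≤ (l.take k).sum := by
  obtain ⟨i, rfl⟩ := Nat.exists_eq_add_of_le hjk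
  rw [List.take_add, List.sum_append]
  have : 0 ≤ ((l.drop j).take i).sum :=
    List.sum_nonneg fun x hx => (hpos x (List.mem_of_mem_drop (List.mem_of_mem_take hx))).le
  linarith

lemma sum_take_lt {l : List ℝ} (hpos : ∀ x ∈ l, 0 < x) {j k : ℕ} (hjk : j < k)
    (hk : k ≤ l.length) : (l.take j).sum < (l.take k).sum := by
  obtain ⟨i, rfl⟩ := Nat.exists_eq_add_of_lt hjk
  rw [show j + i + 1 = j + (i+1) by omega, List.take_add, List.sum_append]
  have hne : (l.drop j).take (i+1) ≠ [] := by
    have : ((l.drop j).take (i+1)).length = min (i+1) (l.length - j) := by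
      simp [List.length_take]
    intro h
    rw [h] at this
    simp at this
    omega
  have : 0 < ((l.drop j).take (i+1)).sum :=
    List.sum_pos _ (fun x hx => hpos x (List.mem_of_mem_drop (List.mem_of_mem_take hx))) hne
  linarith

lemma take_insert_sum_le {l : List ℝ} (d : ℝ) (k j : ℕ) (hj : j ≤ k) (hk : k ≤ l.length) :
    ((l.take k ++ d :: l.drop k).take j).sum = (l.take j).sum := by
  rw [List.take_append_of_le_length (by rw [List.length_take]; omega), List.take_take,
    min_eq_left hj]

lemma take_insert_sum_ge {l : List ℝ} (d : ℝ) (k i : ℕ) (hk : k ≤ l.length) :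
    ((l.take k ++ d :: l.drop k).take (k+1+i)).sum = d + (l.take (k+i)).sum := by
  have hlen : (l.take k).length = k := by rw [List.length_take]; omega
  have h1 : (l.take k ++ d :: l.drop k).take (k+1+i) = l.take k ++ (d :: l.drop k).take (1+i) := by
    rw [List.take_append, List.take_of_length_le (by rw [hlen]; omega), hlen,
      show k+1+i-k = 1+i by omega]
  rw [h1]
  rw [show (1:ℕ)+i = i+1 by omega]
  simp only [List.take_succ_cons, List.sum_append, List.sum_cons]
  rw [List.take_add, List.sum_append]
  ring

lemma insert_perm {d : ℝ} {l L : List ℝ} (h : L.Perm (d :: l)) (k : ℕ) :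
    (l.take k ++ d :: l.drop k).Perm L := by
  have h1 : (l.take k ++ d :: l.drop k).Perm (d :: (l.take k ++ l.drop k)) := List.perm_middle
  rw [List.take_append_drop] at h1
  exact h1.trans h.symm

lemma grass_list (n : ℕ) : ∀ (L : List ℝ) (M : Finset ℝ), L.length = n → L.Nodup →
    (∀ x ∈ L, 0 < x) → (∀ m ∈ M, 0 < m) → M.card < n → L.sum ∉ M →
    ∃ L' : List ℝ, L'.Perm L ∧ ∀ k : ℕ, 1 ≤ k → (L'.take k).sum ∉ M := by
  induction n using Nat.strong_induction_on with
  | _ n IH =>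
  intro L M hlen hnd hpos hMpos hcard hsum
  classical
  rcases Finset.eq_empty_or_nonempty M with hM | hM
  · exact ⟨L, List.Perm.refl L, by simp [hM]⟩
  have hn2 : 2 ≤ n := by have := Finset.card_pos.mpr hM; omega
  have hLne : L ≠ [] := by
    intro h; rw [h] at hlen; simp at hlen; omega
  have hFne : L.toFinset.Nonempty := by
    obtain ⟨x, hx⟩ := List.exists_mem_of_ne_nil L hLne
    exact ⟨x, List.mem_toFinset.mpr hx⟩
  set d := L.toFinset.max' hFne with hd_def
  have hdL : d ∈ L := List.mem_toFinset.mp (L.toFinset.max'_mem hFne)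
  have hdmax : ∀ x ∈ L, x ≤ d := fun x hx => Finset.le_max' _ x (List.mem_toFinset.mpr hx)
  set Ls := L.erase d with hLs_def
  have hpermL : L.Perm (d :: Ls) := List.perm_cons_erase hdL
  have hLs_len : Ls.length = n - 1 := by
    rw [hLs_def, List.length_erase_of_mem hdL, hlen]
  have hLs_nd : Ls.Nodup := hnd.erase d
  have hLs_pos : ∀ x ∈ Ls, 0 < x := fun x hx => hpos x (List.mem_of_mem_erase hx)
  have hLs_lt : ∀ c ∈ Ls, c < d := by
    intro c hc
    have h2 := (List.Nodup.mem_erase_iff hnd).mp hc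
    exact lt_of_le_of_ne (hdmax c h2.2) h2.1
  set T := L.sum with hT
  set R := Ls.sum with hR
  have hTR : T = d + R := by rw [hT, hpermL.sum_eq, List.sum_cons, hR]
  by_cases hRM : R ∈ M
  · -- Case 2 : R = T - d is a mine
    set W : Finset ℝ := Ls.toFinset.filter (fun c => T - c ∈ M) with hW
    set N : Finset ℝ :=
      (M.filter (fun m => m < R)) ∪ ((W.image (fun c => R - c)).filter (fun p => 0 < p)) with hN
    have hWsub : insert R (W.image (fun c => T - c)) ⊆ M.filter (fun m => ¬ m < R) := by
      intro m hm
      rcases Finset.mem_insert.mp hm with rfl | hm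
      · exact Finset.mem_filter.mpr ⟨hRM, lt_irrefl _⟩
      · obtain ⟨c, hcW, rfl⟩ := Finset.mem_image.mp hm
        obtain ⟨hcLs, hcM⟩ := Finset.mem_filter.mp hcW
        have hcd : c < d := hLs_lt c (List.mem_toFinset.mp hcLs)
        refine Finset.mem_filter.mpr ⟨hcM, ?_⟩
        rw [hTR]; push_neg; linarith
    have hWcard : W.card + 1 ≤ (M.filter (fun m => ¬ m < R)).card := by
      have h1 : (insert R (W.image (fun c => T - c))).card = W.card + 1 := by
        have hinj : Set.InjOn (fun c => T - c) W := by
          intro a _ b _ hab; dsimp at hab; linarith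
        have hnm : R ∉ W.image (fun c => T - c) := by
          intro hmem
          obtain ⟨c, hcW, hc⟩ := Finset.mem_image.mp hmem
          have hcd : c < d := hLs_lt c (List.mem_toFinset.mp (Finset.mem_filter.mp hcW).1)
          rw [hTR] at hc
          have hcdeq : c = d := by linarith
          exact absurd hcdeq (ne_of_lt hcd)
        rw [Finset.card_insert_of_notMem hnm, Finset.card_image_of_injOn hinj]
      calc W.card + 1 = (insert R (W.image (fun c => T - c))).card := h1.symm
        _ ≤ (M.filter (fun m => ¬ m < R)).card := Finset.card_le_card hWsub
    have hNcard : N.card < n - 1 := by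
      have h2 := Finset.card_filter_add_card_filter_not (p := fun m => m < R) (s := M)
      have h3 : ((W.image (fun c => R - c)).filter (fun p => 0 < p)).card ≤ W.card :=
        le_trans (Finset.card_filter_le _ _) Finset.card_image_le
      have h4 : N.card ≤ (Finset.filter (fun m => m < R) M).card +
          (Finset.filter (fun p => 0 < p) (Finset.image (fun c => R - c) W)).card := by
        rw [hN]; exact Finset.card_union_le _ _
      omega
    have hNpos : ∀ m ∈ N, 0 < m := by
      intro m hm
      rcases Finset.mem_union.mp hm with h | h
      · exact hMpos m (Finset.mem_filter.mp h).1
      · exact (Finset.mem_filter.mp h).2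
    have hRN : R ∉ N := by
      intro h
      rcases Finset.mem_union.mp h with h | h
      · exact lt_irrefl R (Finset.mem_filter.mp h).2
      · obtain ⟨h1, _⟩ := Finset.mem_filter.mp h
        obtain ⟨c, hcW, hc⟩ := Finset.mem_image.mp h1
        have : 0 < c := hLs_pos c (List.mem_toFinset.mp (Finset.mem_filter.mp hcW).1)
        linarith
    obtain ⟨Ls', hperm', hpref'⟩ := IH (n-1) (by omega) Ls N hLs_len hLs_nd hLs_pos hNpos hNcard
      (by exact hRN)
    have hlen' : Ls'.length = n - 1 := hperm'.length_eq.trans hLs_len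
    have hLs'_pos : ∀ x ∈ Ls', 0 < x := fun x hx => hLs_pos x (hperm'.subset hx)
    have hLs'_sum : Ls'.sum = R := hperm'.sum_eq
    have hLs'_ne : Ls' ≠ [] := by
      intro h; rw [h] at hlen'; simp at hlen'; omega
    set c₀ := Ls'.getLast hLs'_ne with hc0
    have hc0_mem : c₀ ∈ Ls := hperm'.subset (List.getLast_mem hLs'_ne)
    have hsplit : Ls'.take (n-2) ++ [c₀] = Ls' := by
      have h := List.dropLast_append_getLast hLs'_ne
      rw [List.dropLast_eq_take, hlen', show n - 1 - 1 = n - 2 by omega] at h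
      exact h
    have hs2 : (Ls'.take (n-2)).sum + c₀ = R := by
      conv_rhs => rw [← hLs'_sum, ← hsplit]
      rw [List.sum_append]; simp
    have hc0_good : T - c₀ ∉ M := by
      intro hbad
      have hc0W : c₀ ∈ W := Finset.mem_filter.mpr ⟨List.mem_toFinset.mpr hc0_mem, hbad⟩
      by_cases hpos0 : 0 < R - c₀
      · have hn3 : 1 ≤ n - 2 := by
          by_contra h
          have h0 : n - 2 = 0 := by omega
          rw [h0] at hs2; simp at hs2; rw [hs2] at hpos0; linarith
        have hmem : R - c₀ ∈ N := Finset.mem_union.mpr (Or.inr (Finset.mem_filter.mpr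
          ⟨Finset.mem_image.mpr ⟨c₀, hc0W, rfl⟩, hpos0⟩))
        have hgood := hpref' (n-2) hn3
        have heq : (Ls'.take (n-2)).sum = R - c₀ := by linarith
        rw [heq] at hgood; exact hgood hmem
      · push_neg at hpos0
        have h1 : (Ls'.take (n-2)).sum ≤ 0 := by linarith
        have h2 : Ls'.take (n-2) = [] := by
          by_contra h
          exact absurd (List.sum_pos _ (fun x hx => hLs'_pos x (List.mem_of_mem_take hx)) h)
            (by linarith)
        have hc0R : c₀ = R := by rw [h2] at hs2; simpa using hs2
        have hn2' : n = 2 := by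
          have h3 := congrArg List.length h2
          simp [List.length_take, hlen'] at h3
          omega
        have hdM : d ∈ M := by
          have : d = T - c₀ := by rw [hTR, hc0R]; ring
          rw [this]; exact hbad
        have hne : R ≠ d := by
          have := hLs_lt c₀ hc0_mem; rw [hc0R] at this; exact ne_of_lt this
        have hsubM : ({R, d} : Finset ℝ) ⊆ M := by
          intro z hz
          rcases Finset.mem_insert.mp hz with rfl | hz
          · exact hRM
          · rw [Finset.mem_singleton.mp hz]; exact hdM
        have : 2 ≤ M.card := by
          calc 2 = ({R, d} : Finset ℝ).card := (Finset.card_pair hne).symm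
            _ ≤ M.card := Finset.card_le_card hsubM
        omega
    have hs_lt_R : ∀ i, i ≤ n-2 → (Ls'.take i).sum < R := by
      intro i hi
      have h := sum_take_lt hLs'_pos (show i < n-1 by omega) (le_of_eq hlen'.symm)
      rwa [List.take_of_length_le (le_of_eq hlen'), hLs'_sum] at h
    have hs_safe : ∀ i, 1 ≤ i → i ≤ n-2 → (Ls'.take i).sum ∉ M := by
      intro i h1 h2 hmem
      exact hpref' i h1 (Finset.mem_union.mpr (Or.inl
        (Finset.mem_filter.mpr ⟨hmem, hs_lt_R i h2⟩)))
    set B : Finset ℕ := (Finset.range (n-1)).filter (fun i => (Ls'.take i).sum + d ∈ M) with hB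
    have hBtop : (n-2) ∉ B := by
      intro h
      have hmm := (Finset.mem_filter.mp h).2
      have heq : (Ls'.take (n-2)).sum + d = T - c₀ := by rw [hTR]; linarith
      rw [heq] at hmm; exact hc0_good hmm
    by_cases hBne : B.Nonempty
    case pos =>
      set k₀ := B.max' hBne + 1 with hk0
      have hk₀le : k₀ ≤ n - 2 := by
        have h1 := B.max'_mem hBne
        have h2 := Finset.mem_range.mp (Finset.mem_filter.mp h1).1
        have h3 : B.max' hBne ≠ n-2 := fun h => hBtop (h ▸ h1)
        omega
      have hk₀M : ∀ i, k₀ ≤ i → i ≤ n-2 → (Ls'.take i).sum + d ∉ M := by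
        intro i h1 h2 hmem
        have : i ∈ B := Finset.mem_filter.mpr ⟨Finset.mem_range.mpr (by omega), hmem⟩
        have := Finset.le_max' B i this
        omega
      refine ⟨Ls'.take k₀ ++ d :: Ls'.drop k₀, insert_perm (hpermL.trans (List.Perm.cons d hperm'.symm)) k₀, ?_⟩
      intro k hk
      rcases le_or_gt k k₀ with hcase | hcase
      · rw [take_insert_sum_le d k₀ k hcase (by omega)]
        exact hs_safe k hk (by omega)
      · obtain ⟨i, rfl⟩ : ∃ i, k = k₀ + 1 + i := ⟨k - k₀ - 1, by omega⟩
        rw [take_insert_sum_ge d k₀ i (by omega)]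
        rcases le_or_gt (k₀ + i) (n-2) with h | h
        · intro hmem
          exact hk₀M (k₀+i) (by omega) h (by rwa [add_comm] at hmem)
        · rw [List.take_of_length_le (by omega), hLs'_sum, ← hTR]
          exact hsum
    case neg =>
      have hk₀M : ∀ i, i ≤ n-2 → (Ls'.take i).sum + d ∉ M := by
        intro i h2 hmem
        exact hBne ⟨i, Finset.mem_filter.mpr ⟨Finset.mem_range.mpr (by omega), hmem⟩⟩
      refine ⟨Ls'.take 0 ++ d :: Ls'.drop 0, insert_perm
        (hpermL.trans (List.Perm.cons d hperm'.symm)) 0, ?_⟩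
      intro k hk
      obtain ⟨i, rfl⟩ : ∃ i, k = 0 + 1 + i := ⟨k - 1, by omega⟩
      rw [take_insert_sum_ge d 0 i (by omega)]
      rcases le_or_gt (0 + i) (n-2) with h | h
      · intro hmem
        exact hk₀M (0+i) h (by rwa [add_comm] at hmem)
      · rw [List.take_of_length_le (by omega), hLs'_sum, ← hTR]
        exact hsum
  · -- Case 1 : R ∉ M
    by_cases hall : ∀ m ∈ M, m < R
    · -- all mines below R
      set μ := M.max' hM with hμ
      have hμM : μ ∈ M := M.max'_mem hM
      have hμR : μ < R := hall μ hμM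
      set N := M.erase μ with hN
      have hNcard : N.card < n - 1 := by
        rw [hN, Finset.card_erase_of_mem hμM]
        have := Finset.card_pos.mpr hM
        omega
      obtain ⟨Ls', hperm', hpref'⟩ := IH (n-1) (by omega) Ls N hLs_len hLs_nd hLs_pos
        (fun m hm => hMpos m (Finset.mem_of_mem_erase hm)) hNcard
        (fun h => hRM (Finset.mem_of_mem_erase h))
      have hlen' : Ls'.length = n - 1 := hperm'.length_eq.trans hLs_len
      have hLs'_pos : ∀ x ∈ Ls', 0 < x := fun x hx => hLs_pos x (hperm'.subset hx)
      have hLs'_sum : Ls'.sum = R := hperm'.sum_eq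
      have hMsplit : ∀ z, z ∈ M → z ≠ μ → z ∈ N := fun z h1 h2 => Finset.mem_erase.mpr ⟨h2, h1⟩
      by_cases hhit : ∃ i, 1 ≤ i ∧ i ≤ n-1 ∧ (Ls'.take i).sum = μ
      · obtain ⟨k, hk1, hk2, hkμ⟩ := hhit
        have hkn2 : k ≤ n - 2 := by
          by_contra h
          have hk' : k = n-1 := by omega
          rw [hk', List.take_of_length_le (le_of_eq hlen'), hLs'_sum] at hkμ
          exact absurd hkμ.symm (ne_of_lt hμR)
        set k' := k - 1 with hk'
        have hkk : k = k' + 1 := by omega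
        have hk'lt : k' < Ls'.length := by omega
        set b := Ls'.get ⟨k', hk'lt⟩ with hb
        have hbmem : b ∈ Ls' := Ls'.get_mem ⟨k', hk'lt⟩
        have hbd : b < d := hLs_lt b (hperm'.subset hbmem)
        have hbpos : 0 < b := hLs'_pos b hbmem
        have hsk : (Ls'.take k').sum + b = μ := by
          rw [hkk] at hkμ
          rw [← hkμ, List.sum_take_succ _ _ hk'lt, hb, List.get_eq_getElem]
        refine ⟨Ls'.take k' ++ d :: Ls'.drop k',
          insert_perm (hpermL.trans (List.Perm.cons d hperm'.symm)) k', ?_⟩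
        intro j hj
        rcases le_or_gt j k' with hcase | hcase
        · rw [take_insert_sum_le d k' j hcase (by omega)]
          intro hmem
          have hle : (Ls'.take j).sum ≤ (Ls'.take k').sum := sum_take_le hLs'_pos hcase
          have hne : (Ls'.take j).sum ≠ μ := by linarith
          exact hpref' j hj (hMsplit _ hmem hne)
        · obtain ⟨i, rfl⟩ : ∃ i, j = k' + 1 + i := ⟨j - k' - 1, by omega⟩
          rw [take_insert_sum_ge d k' i (by omega)]
          intro hmem
          have h1 : (Ls'.take k').sum ≤ (Ls'.take (k'+i)).sum := sum_take_le hLs'_pos (by omega)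
          have h2 : d + (Ls'.take (k'+i)).sum ≤ μ := Finset.le_max' M _ hmem
          linarith
      · push_neg at hhit
        refine ⟨Ls' ++ [d], ((List.perm_append_singleton d Ls').trans (List.Perm.cons d hperm')).trans hpermL.symm, ?_⟩
        intro j hj
        rcases le_or_gt j (n-1) with hcase | hcase
        · rw [List.take_append_of_le_length (by omega)]
          intro hmem
          exact hpref' j hj (hMsplit _ hmem (hhit j hj hcase))
        · rw [List.take_of_length_le (by simp [hlen']; omega)]
          have : (Ls' ++ [d]).sum = T := by
            rw [List.sum_append, hLs'_sum, hTR]; simp [add_comm]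
          rw [this]; exact hsum
    · -- some mine ≥ R
      push_neg at hall
      obtain ⟨m₀, hm₀M, hm₀⟩ := hall
      set N := M.filter (fun m => m < R) with hN
      have hNss : N ⊂ M := by
        refine ⟨Finset.filter_subset _ _, fun h => ?_⟩
        have := (Finset.mem_filter.mp (h hm₀M)).2
        linarith
      have hNcard : N.card < n - 1 := by
        have := Finset.card_lt_card hNss
        omega
      obtain ⟨Ls', hperm', hpref'⟩ := IH (n-1) (by omega) Ls N hLs_len hLs_nd hLs_pos
        (fun m hm => hMpos m (Finset.mem_filter.mp hm).1) hNcard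
        (fun h => lt_irrefl R (by rw [← hR] at h; exact (Finset.mem_filter.mp h).2))
      have hlen' : Ls'.length = n - 1 := hperm'.length_eq.trans hLs_len
      have hLs'_pos : ∀ x ∈ Ls', 0 < x := fun x hx => hLs_pos x (hperm'.subset hx)
      have hLs'_sum : Ls'.sum = R := hperm'.sum_eq
      refine ⟨Ls' ++ [d], ((List.perm_append_singleton d Ls').trans (List.Perm.cons d hperm')).trans hpermL.symm, ?_⟩
      intro j hj
      rcases le_or_gt j (n-1) with hcase | hcase
      · rw [List.take_append_of_le_length (by omega)]
        intro hmem
        have hle : (Ls'.take j).sum ≤ R := by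
          have := sum_take_le hLs'_pos (show j ≤ n-1 from hcase)
          rwa [List.take_of_length_le (le_of_eq hlen'), hLs'_sum] at this
        have hlt : (Ls'.take j).sum < R := lt_of_le_of_ne hle (fun h => hRM (h ▸ hmem))
        exact hpref' j hj (Finset.mem_filter.mpr ⟨hmem, hlt⟩)
      · rw [List.take_of_length_le (by simp [hlen']; omega)]
        have : (Ls' ++ [d]).sum = T := by
          rw [List.sum_append, hLs'_sum, hTR]; simp [add_comm]
        rw [this]; exact hsum

/-- The grasshopper problem for distinct positive real jump lengths: for
distinct positive reals `a 0, …, a (n-1)` and a set `M` of `n - 1` positive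
reals not containing `s = ∑ i, a i`, there is an order of the jumps such
that no partial sum lands in `M`. -/
theorem grasshopper_real (n : ℕ) (hn : 1 ≤ n) (a : Fin n → ℝ)
    (ha_pos : ∀ i, 0 < a i) (ha_inj : Function.Injective a)
    (M : Finset ℝ) (hM_card : M.card = n - 1) (hM_pos : ∀ m ∈ M, 0 < m)
    (hs : (∑ i, a i) ∉ M) :
    ∃ σ : Equiv.Perm (Fin n), ∀ l : ℕ, 1 ≤ l → l ≤ n →
      (∑ k ∈ Finset.univ.filter (fun k : Fin n => (k : ℕ) < l), a (σ k)) ∉ M := by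
  classical
  have hnodup : (List.ofFn a).Nodup := List.nodup_ofFn.mpr ha_inj
  have hpos : ∀ x ∈ List.ofFn a, 0 < x := by
    intro x hx
    obtain ⟨i, rfl⟩ := List.mem_ofFn.mp hx
    exact ha_pos i
  have hsum : (List.ofFn a).sum ∉ M := by rw [List.sum_ofFn]; exact hs
  obtain ⟨L', hperm, hpref⟩ := grass_list n (List.ofFn a) M (by simp) hnodup hpos hM_pos
    (by omega) hsum
  have hlen : L'.length = n := by rw [hperm.length_eq]; simp
  have hget : ∀ i : Fin n, ∃ j : Fin n, a j = L'.get (Fin.cast hlen.symm i) := by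
    intro i
    have : L'.get (Fin.cast hlen.symm i) ∈ List.ofFn a := hperm.subset (L'.get_mem _)
    exact List.mem_ofFn.mp this
  choose g hg using hget
  have hinj : Function.Injective g := by
    intro i j hij
    have h1 : L'.get (Fin.cast hlen.symm i) = L'.get (Fin.cast hlen.symm j) := by
      rw [← hg i, ← hg j, hij]
    have h2 := List.nodup_iff_injective_get.mp (hperm.nodup_iff.mpr hnodup) h1
    have h3 := congrArg Fin.val h2
    simp only [Fin.coe_cast] at h3
    exact Fin.ext h3
  have hbij : Function.Bijective g := Finite.injective_iff_bijective.mp hinj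
  refine ⟨Equiv.ofBijective g hbij, ?_⟩
  intro l hl1 _
  have hofFn : List.ofFn (fun i : Fin n => a (g i)) = L' := by
    apply List.ext_get (by simp [hlen])
    intro i h1 h2
    rw [List.get_ofFn]
    simp only [hg]
    congr 1
  have hkey := List.sum_take_ofFn (fun i : Fin n => a (g i)) l
  rw [hofFn] at hkey
  have hco : ∀ k : Fin n, a ((Equiv.ofBijective g hbij) k) = a (g k) := fun k => rfl
  simp only [Equiv.ofBijective_apply]
  rw [← hkey]
  exact hpref l hl1
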